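/- arXiv:math/0009102 — 2 statements merged into one kernel-verified Lean document; each statement's English description precedes it below -/
import Mathlib

section
/- (Capacity region of the s-user Multiple Access Adder Channel, via Ulrey's characterization) Let s ≥ 1. For p = (p_1,…,p_s) ∈ [0,1]^s and A ⊆ [s], let h(A,p) = −∑_{k=0}^{|A|} b_A(k,p)·log₂ b_A(k,p), where b_A(k,p) = ∑_{B ⊆ A, |B| = k} ∏_{i∈B} p_i · ∏_{j∈A∖B} (1−p_j) (the entropy of ∑_{i∈A} X_i for independent Bernoulli(p_i) inputs). For each p let P(p) = {R ∈ ℝ^s : R_i ≥ 0 for all i, and ∑_{i∈A} R_i ≤ h(A,p) for all A ⊆ [s]}. Then the closure of the convex hull of ⋃_{p ∈ [0,1]^s} P(p) equals the single polyhedron {R ∈ ℝ^s : R_i ≥ 0 for all i, and ∑_{i∈A} R_i ≤ H_{|A|}(1/2) for all A ⊆ [s]}. -/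
open Finset

/-- `b_A(k,p)`: the probability that a sum of independent Bernoulli(`p i`),
`i ∈ A`, random variables equals `k`. -/
noncomputable def pbinOn (s : ℕ) (A : Finset (Fin s)) (p : Fin s → ℝ) (k : ℕ) : ℝ :=
  ∑ B ∈ A.powerset.filter (fun B : Finset (Fin s) => B.card = k),
    (∏ i ∈ B, p i) * ∏ j ∈ A \ B, (1 - p j)

/-- `h(A,p)`: the Shannon entropy (base 2) of `∑_{i ∈ A} X_i` for independent
Bernoulli(`p i`) inputs, with the convention `0 · log₂ 0 = 0`. -/
noncomputable def hEnt (s : ℕ) (A : Finset (Fin s)) (p : Fin s → ℝ) : ℝ :=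
  -∑ k ∈ Finset.range (A.card + 1),
    pbinOn s A p k * Real.logb 2 (pbinOn s A p k)

/-- `H_n(q)`: Shannon entropy of the binomial distribution `B(n,q)`. -/
noncomputable def binomEnt (n : ℕ) (q : ℝ) : ℝ :=
  -∑ k ∈ Finset.range (n + 1),
    ((n.choose k : ℝ) * q ^ k * (1 - q) ^ (n - k)) *
      Real.logb 2 ((n.choose k : ℝ) * q ^ k * (1 - q) ^ (n - k))

/-- The polyhedron of rate tuples associated with the input distribution `p`. -/
def ratePoly (s : ℕ) (p : Fin s → ℝ) : Set (Fin s → ℝ) :=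
  {R | (∀ i, 0 ≤ R i) ∧ ∀ A : Finset (Fin s), ∑ i ∈ A, R i ≤ hEnt s A p}


open Real

noncomputable def hnatOn (s : ℕ) (A : Finset (Fin s)) (p : Fin s → ℝ) : ℝ :=
  ∑ k ∈ Finset.range (A.card + 1), Real.negMulLog (pbinOn s A p k)

noncomputable def bq (n k : ℕ) : ℝ := (n.choose k : ℝ) * (1 / 2 : ℝ) ^ k * (1 / 2 : ℝ) ^ (n - k)

noncomputable def bH (n : ℕ) : ℝ := ∑ k ∈ Finset.range (n + 1), Real.negMulLog (bq n k)

noncomputable def Phi (m : ℕ) (t : ℝ) : ℝ :=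
  Real.log t - Real.log (1 - t)
    + ∑ j ∈ Finset.range (m + 1), (m.choose j : ℝ) * t ^ j * (1 - t) ^ (m - j)
        * (Real.log ((m + 1 - j : ℕ) : ℝ) - Real.log ((j + 1 : ℕ) : ℝ))

variable {s : ℕ} {A : Finset (Fin s)} {p p' : Fin s → ℝ} {a b c i j : Fin s} {k m : ℕ} {t : ℝ}

lemma pbinOn_powersetCard (A : Finset (Fin s)) (p : Fin s → ℝ) (k : ℕ) :
    pbinOn s A p k = ∑ B ∈ A.powersetCard k, (∏ i ∈ B, p i) * ∏ j ∈ A \ B, (1 - p j) := by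
  rw [pbinOn, Finset.powersetCard_eq_filter]

lemma pbinOn_congr (h : ∀ j ∈ A, p j = p' j) (k : ℕ) : pbinOn s A p k = pbinOn s A p' k := by
  rw [pbinOn, pbinOn]
  refine Finset.sum_congr rfl fun B hB => ?_
  simp only [Finset.mem_filter, Finset.mem_powerset] at hB
  refine congrArg₂ _ (Finset.prod_congr rfl fun i hi => h i (hB.1 hi)) ?_
  exact Finset.prod_congr rfl fun j hj => by rw [h j (Finset.mem_sdiff.1 hj).1]

lemma pbinOn_empty (p : Fin s → ℝ) : pbinOn s ∅ p 0 = 1 := by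
  rw [pbinOn_powersetCard, Finset.powersetCard_zero]
  simp

lemma pbinOn_eq_zero (h : A.card < k) : pbinOn s A p k = 0 := by
  rw [pbinOn_powersetCard]
  rw [Finset.powersetCard_eq_empty.2 h]
  simp

lemma pbinOn_insert_zero (ha : a ∉ A) :
    pbinOn s (insert a A) p 0 = (1 - p a) * pbinOn s A p 0 := by
  rw [pbinOn_powersetCard, pbinOn_powersetCard, Finset.powersetCard_zero,
    Finset.powersetCard_zero]
  simp only [Finset.sum_singleton, Finset.prod_empty, one_mul, Finset.sdiff_empty]
  rw [Finset.prod_insert ha, mul_comm]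

lemma insert_sdiff_insert' (ha : a ∉ A) (B : Finset (Fin s)) (hB : B ⊆ A) :
    (insert a A) \ (insert a B) = A \ B := by
  ext x
  simp only [Finset.mem_sdiff, Finset.mem_insert]
  constructor
  · rintro ⟨hx1 | hx1, hx2⟩
    · exact absurd (Or.inl hx1) hx2
    · exact ⟨hx1, fun hxB => hx2 (Or.inr hxB)⟩
  · rintro ⟨hx1, hx2⟩
    refine ⟨Or.inr hx1, ?_⟩
    rintro (rfl | hxB)
    · exact ha hx1
    · exact hx2 hxB

lemma pbinOn_insert_succ (ha : a ∉ A) :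
    pbinOn s (insert a A) p (k + 1) =
      (1 - p a) * pbinOn s A p (k + 1) + p a * pbinOn s A p k := by
  rw [pbinOn_powersetCard, Finset.powersetCard_succ_insert ha]
  have hdisj : Disjoint (A.powersetCard (k + 1)) ((A.powersetCard k).image (insert a)) := by
    rw [Finset.disjoint_left]
    intro B hB hB'
    have hBA : B ⊆ A := (Finset.mem_powersetCard.1 hB).1
    obtain ⟨B', hB', rfl⟩ := Finset.mem_image.1 hB'
    exact ha (hBA (Finset.mem_insert_self a B'))
  rw [Finset.sum_union hdisj]
  congr 1
  · rw [pbinOn_powersetCard, Finset.mul_sum]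
    refine Finset.sum_congr rfl fun B hB => ?_
    have hBA : B ⊆ A := (Finset.mem_powersetCard.1 hB).1
    have haB : a ∉ A \ B := fun h => ha (Finset.mem_sdiff.1 h).1
    have : (insert a A) \ B = insert a (A \ B) := by
      rw [Finset.insert_sdiff_of_notMem _ (fun h => ha (hBA h))]
    rw [this, Finset.prod_insert haB]
    ring
  · rw [Finset.sum_image, pbinOn_powersetCard, Finset.mul_sum]
    · refine Finset.sum_congr rfl fun B hB => ?_
      have hBA : B ⊆ A := (Finset.mem_powersetCard.1 hB).1
      have haB : a ∉ B := fun h => ha (hBA h)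
      rw [Finset.prod_insert haB, insert_sdiff_insert' ha B hBA]
      ring
    · intro x hx y hy hxy
      have hax : a ∉ x := fun h => ha ((Finset.mem_powersetCard.1 hx).1 h)
      have hay : a ∉ y := fun h => ha ((Finset.mem_powersetCard.1 hy).1 h)
      rw [← Finset.erase_insert hax, hxy, Finset.erase_insert hay]

lemma pbinOn_erase_zero (ha : a ∈ A) :
    pbinOn s A p 0 = (1 - p a) * pbinOn s (A.erase a) p 0 := by
  conv_lhs => rw [← Finset.insert_erase ha]
  exact pbinOn_insert_zero (Finset.notMem_erase a A)

lemma pbinOn_erase_succ (ha : a ∈ A) :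
    pbinOn s A p (k + 1) =
      (1 - p a) * pbinOn s (A.erase a) p (k + 1) + p a * pbinOn s (A.erase a) p k := by
  conv_lhs => rw [← Finset.insert_erase ha]
  exact pbinOn_insert_succ (Finset.notMem_erase a A)

lemma pbinOn_nonneg (hp : ∀ i ∈ A, 0 ≤ p i ∧ p i ≤ 1) (k : ℕ) : 0 ≤ pbinOn s A p k := by
  refine Finset.sum_nonneg fun B hB => ?_
  simp only [Finset.mem_filter, Finset.mem_powerset] at hB
  refine mul_nonneg (Finset.prod_nonneg fun i hi => (hp i (hB.1 hi)).1)
    (Finset.prod_nonneg fun j hj => ?_)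
  have := (hp j (Finset.mem_sdiff.1 hj).1).2
  linarith

lemma pbinOn_pos (hp : ∀ i ∈ A, 0 < p i ∧ p i < 1) : ∀ k ≤ A.card, 0 < pbinOn s A p k := by
  induction A using Finset.induction_on with
  | empty =>
    intro k hk
    rw [Finset.card_empty, Nat.le_zero] at hk; subst hk
    rw [pbinOn_empty]; norm_num
  | @insert a A ha IH =>
    intro k hk
    have hpa := hp a (Finset.mem_insert_self a A)
    have hp' : ∀ i ∈ A, 0 < p i ∧ p i < 1 := fun i hi => hp i (Finset.mem_insert_of_mem hi)
    have hnn : ∀ j, 0 ≤ pbinOn s A p j :=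
      pbinOn_nonneg fun i hi => ⟨(hp' i hi).1.le, (hp' i hi).2.le⟩
    rw [Finset.card_insert_of_notMem ha] at hk
    match k, hk with
    | 0, _ =>
      rw [pbinOn_insert_zero ha]
      exact mul_pos (by linarith [hpa.2]) (IH hp' 0 (Nat.zero_le _))
    | k + 1, hk =>
      rw [pbinOn_insert_succ ha]
      have h2 : 0 < p a * pbinOn s A p k :=
        mul_pos hpa.1 (IH hp' k (Nat.succ_le_succ_iff.1 hk))
      have h1 : 0 ≤ (1 - p a) * pbinOn s A p (k + 1) :=
        mul_nonneg (by linarith [hpa.2]) (hnn _)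
      linarith

lemma pbinOn_strict_lc (hp : ∀ i ∈ A, 0 < p i ∧ p i < 1) :
    ∀ k, k + 2 ≤ A.card → pbinOn s A p k * pbinOn s A p (k + 2) < (pbinOn s A p (k + 1)) ^ 2 := by
  induction A using Finset.induction_on with
  | empty => intro k hk; simp at hk
  | @insert a A ha IH =>
    intro k hk
    have hpa := hp a (Finset.mem_insert_self a A)
    have hp' : ∀ i ∈ A, 0 < p i ∧ p i < 1 := fun i hi => hp i (Finset.mem_insert_of_mem hi)
    have hnn : ∀ j, 0 ≤ pbinOn s A p j :=
      pbinOn_nonneg fun i hi => ⟨(hp' i hi).1.le, (hp' i hi).2.le⟩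
    have hpos := pbinOn_pos hp'
    have hwk : ∀ j, pbinOn s A p j * pbinOn s A p (j + 2) ≤ (pbinOn s A p (j + 1)) ^ 2 := by
      intro j
      rcases le_or_gt (j + 2) A.card with h | h
      · exact (IH hp' j h).le
      · rw [pbinOn_eq_zero h, mul_zero]; positivity
    rw [Finset.card_insert_of_notMem ha] at hk
    have hq0 : 0 < p a := hpa.1
    have hq1 : 0 < 1 - p a := by linarith [hpa.2]
    match k, hk with
    | 0, hk =>
      -- c_0 c_2 < c_1 ^ 2, need 1 ≤ A.card
      have hcard : 1 ≤ A.card := Nat.succ_le_succ_iff.1 hk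
      rw [pbinOn_insert_zero ha, pbinOn_insert_succ ha, pbinOn_insert_succ ha]
      have ha0 : 0 < pbinOn s A p 0 := hpos 0 (Nat.zero_le _)
      have ha1 : 0 < pbinOn s A p 1 := hpos 1 hcard
      have h1 : pbinOn s A p 0 * pbinOn s A p 2 ≤ (pbinOn s A p 1) ^ 2 := hwk 0
      nlinarith [mul_pos (mul_pos hq0 hq0) (mul_pos ha0 ha0),
        mul_pos (mul_pos hq0 hq1) (mul_pos ha0 ha1),
        mul_le_mul_of_nonneg_left h1 (mul_nonneg hq1.le hq1.le), hnn 2]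
    | k + 1, hk =>
      have hcard : k + 2 ≤ A.card := Nat.succ_le_succ_iff.1 hk
      rw [pbinOn_insert_succ ha, pbinOn_insert_succ ha, pbinOn_insert_succ ha]
      have hak : 0 < pbinOn s A p k := hpos k (by omega)
      have hak1 : 0 < pbinOn s A p (k + 1) := hpos (k + 1) (by omega)
      have hak2 : 0 < pbinOn s A p (k + 2) := hpos (k + 2) hcard
      have h1 : pbinOn s A p (k + 1) * pbinOn s A p (k + 3) ≤ (pbinOn s A p (k + 2)) ^ 2 :=
        hwk (k + 1)
      have h2 : pbinOn s A p k * pbinOn s A p (k + 2) < (pbinOn s A p (k + 1)) ^ 2 :=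
        IH hp' k hcard
      have h3 : pbinOn s A p k * pbinOn s A p (k + 3) <
          pbinOn s A p (k + 1) * pbinOn s A p (k + 2) := by
        rcases le_or_gt (k + 3) A.card with h | h
        · have h1' : pbinOn s A p (k + 1) * pbinOn s A p (k + 3) <
              (pbinOn s A p (k + 2)) ^ 2 := IH hp' (k + 1) h
          have hmul := mul_lt_mul'' h2 h1'
            (mul_nonneg hak.le hak2.le) (mul_nonneg hak1.le (hnn (k + 3)))
          have hpos2 : 0 < pbinOn s A p (k + 1) * pbinOn s A p (k + 2) :=
            mul_pos hak1 hak2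
          nlinarith [hmul, hpos2]
        · rw [pbinOn_eq_zero h, mul_zero]
          exact mul_pos hak1 hak2
      nlinarith [mul_le_mul_of_nonneg_left h1 (mul_nonneg hq1.le hq1.le),
        mul_lt_mul_of_pos_left h3 (mul_pos hq0 hq1),
        mul_le_mul_of_nonneg_left h2.le (mul_nonneg hq0.le hq0.le)]


/-- binomial formula for constant parameter -/
lemma pbinOn_const (ht : ∀ i ∈ A, p i = t) :
    ∀ k, pbinOn s A p k = (A.card.choose k : ℝ) * t ^ k * (1 - t) ^ (A.card - k) := by
  induction A using Finset.induction_on with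
  | empty =>
    intro k
    match k with
    | 0 => rw [pbinOn_empty]; simp
    | k + 1 => rw [pbinOn_eq_zero (by simp)]; simp
  | @insert a A ha IH =>
    intro k
    have hta : p a = t := ht a (Finset.mem_insert_self a A)
    have ht' : ∀ i ∈ A, p i = t := fun i hi => ht i (Finset.mem_insert_of_mem hi)
    rw [Finset.card_insert_of_notMem ha]
    match k with
    | 0 =>
      rw [pbinOn_insert_zero ha, IH ht' 0, hta]
      simp only [Nat.choose_zero_right, Nat.cast_one, pow_zero, Nat.sub_zero, pow_succ]
      ring
    | k + 1 =>
      rw [pbinOn_insert_succ ha, IH ht' (k + 1), IH ht' k, hta]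
      rcases lt_or_ge A.card (k + 1) with h | h
      · rcases Nat.lt_or_ge A.card k with h2 | h2
        · rw [Nat.choose_eq_zero_of_lt h, Nat.choose_eq_zero_of_lt h2,
            Nat.choose_eq_zero_of_lt (by omega)]
          simp
        · have hk : k = A.card := by omega
          subst hk
          rw [Nat.choose_eq_zero_of_lt h, Nat.choose_self, Nat.choose_self]
          have e : A.card - (A.card + 1) = 0 := by omega
          have e2 : A.card + 1 - (A.card + 1) = 0 := by omega
          rw [e, e2, Nat.sub_self]
          push_cast
          ring
      · have e1 : A.card - k = A.card - (k + 1) + 1 := by omega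
        have e2 : A.card + 1 - (k + 1) = A.card - (k + 1) + 1 := by omega
        rw [e1, e2, Nat.choose_succ_succ]
        push_cast
        ring

lemma hEnt_eq : hEnt s A p = hnatOn s A p / Real.log 2 := by
  rw [hEnt, hnatOn, Finset.sum_div, ← Finset.sum_neg_distrib]
  refine Finset.sum_congr rfl fun k _ => ?_
  rw [Real.negMulLog, Real.logb]
  ring



lemma binomEnt_half_eq (n : ℕ) : binomEnt n (1 / 2) = bH n / Real.log 2 := by
  rw [binomEnt, bH, Finset.sum_div, ← Finset.sum_neg_distrib]
  refine Finset.sum_congr rfl fun k _ => ?_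
  rw [bq, Real.negMulLog, Real.logb]
  norm_num
  ring

lemma bq_eq (n k : ℕ) : bq n k = (n.choose k : ℝ) / 2 ^ n := by
  rcases le_or_gt k n with h | h
  · rw [bq, mul_assoc, ← pow_add, Nat.add_sub_cancel' h]
    rw [div_pow, one_pow, div_eq_mul_inv]
    ring
  · rw [bq, Nat.choose_eq_zero_of_lt h]
    simp

lemma bq_nonneg (n k : ℕ) : 0 ≤ bq n k := by
  rw [bq_eq]; positivity

lemma bq_le_one (n k : ℕ) : bq n k ≤ 1 := by
  rw [bq_eq]
  rw [div_le_one (by positivity)]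
  have h1 : n.choose k ≤ 2 ^ n := by
    rcases le_or_gt k n with h | h
    · calc n.choose k ≤ ∑ m ∈ Finset.range (n + 1), n.choose m :=
          Finset.single_le_sum (fun i _ => Nat.zero_le _) (Finset.mem_range.2 (by omega))
        _ = 2 ^ n := Nat.sum_range_choose n
    · rw [Nat.choose_eq_zero_of_lt h]; positivity
  exact_mod_cast h1

lemma bH_nonneg (n : ℕ) : 0 ≤ bH n :=
  Finset.sum_nonneg fun k _ => Real.negMulLog_nonneg (bq_nonneg n k) (bq_le_one n k)

lemma negMulLog_midpoint {a b : ℝ} (ha : 0 ≤ a) (hb : 0 ≤ b) :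
    (Real.negMulLog a + Real.negMulLog b) / 2 ≤ Real.negMulLog ((a + b) / 2) := by
  have := Real.concaveOn_negMulLog.2 (Set.mem_Ici.2 ha) (Set.mem_Ici.2 hb)
    (by norm_num : (0:ℝ) ≤ 1/2) (by norm_num : (0:ℝ) ≤ 1/2) (by norm_num)
  simp only [smul_eq_mul] at this
  calc (Real.negMulLog a + Real.negMulLog b) / 2
      = 1/2 * Real.negMulLog a + 1/2 * Real.negMulLog b := by ring
    _ ≤ Real.negMulLog (1/2 * a + 1/2 * b) := this
    _ = Real.negMulLog ((a + b) / 2) := by ring_nf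

lemma bH_mono (n : ℕ) : bH n ≤ bH (n + 1) := by
  have hzero : bq n (n + 1) = 0 := by
    rw [bq_eq, Nat.choose_eq_zero_of_lt (by omega)]; simp
  have pascal : ∀ k, bq (n + 1) (k + 1) = (bq n k + bq n (k + 1)) / 2 := by
    intro k
    rw [bq_eq, bq_eq, bq_eq, Nat.choose_succ_succ]
    push_cast
    rw [pow_succ]
    field_simp
  have h0 : bq (n + 1) 0 = (bq n 0 + 0) / 2 := by
    rw [bq_eq, bq_eq, Nat.choose_zero_right, Nat.choose_zero_right]
    rw [pow_succ]
    field_simp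
    simp
  have key : bH (n + 1) ≥
      ∑ k ∈ Finset.range (n + 1), (Real.negMulLog (bq n k) + Real.negMulLog (bq n (k + 1))) / 2
        + (Real.negMulLog (bq n 0) + Real.negMulLog 0) / 2 := by
    rw [bH, Finset.sum_range_succ' _ (n + 1)]
    refine add_le_add (Finset.sum_le_sum fun k _ => ?_) ?_
    · rw [pascal k]
      exact negMulLog_midpoint (bq_nonneg n k) (bq_nonneg n (k + 1))
    · rw [h0]
      exact negMulLog_midpoint (bq_nonneg n 0) le_rfl
  have e1 : ∑ k ∈ Finset.range (n + 1), (Real.negMulLog (bq n k) + Real.negMulLog (bq n (k + 1))) / 2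
      = bH n / 2 + (∑ k ∈ Finset.range (n + 1), Real.negMulLog (bq n (k + 1))) / 2 := by
    rw [bH, ← Finset.sum_div, Finset.sum_add_distrib, add_div]
  have e2 : ∑ k ∈ Finset.range (n + 1), Real.negMulLog (bq n (k + 1))
      = bH n - Real.negMulLog (bq n 0) := by
    rw [bH, Finset.sum_range_succ' (fun k => Real.negMulLog (bq n k)) n]
    rw [Finset.sum_range_succ, hzero]
    simp
  rw [e1, e2] at key
  have hmid : Real.negMulLog (bq n 0) / 2 ≤ Real.negMulLog (bq n 0 / 2) := by
    have := negMulLog_midpoint (bq_nonneg n 0) (le_rfl : (0:ℝ) ≤ 0)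
    simp only [Real.negMulLog_zero, add_zero] at this
    linarith
  simp only [Real.negMulLog_zero, add_zero] at key
  -- key : bH n / 2 + (bH n - f(bq n 0))/2 + f(bq n 0)/2 ≤ bH (n+1) (roughly)
  have : bq (n + 1) 0 = bq n 0 / 2 := by rw [h0]; ring
  linarith [key, hmid]

/-- value of `pbinOn` along a coordinate line -/
lemma pbinOn_update (hi : i ∈ A) (x : ℝ) (k : ℕ) :
    pbinOn s A (Function.update p i x) k =
      (1 - x) * pbinOn s (A.erase i) p k +
        x * (match k with | 0 => (0:ℝ) | m + 1 => pbinOn s (A.erase i) p m) := by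
  have hcongr : ∀ m, pbinOn s (A.erase i) (Function.update p i x) m
      = pbinOn s (A.erase i) p m := by
    intro m
    refine pbinOn_congr (fun j hj => ?_) m
    exact Function.update_of_ne (Finset.ne_of_mem_erase hj) x p
  match k with
  | 0 =>
    rw [pbinOn_erase_zero (a := i) hi, hcongr, Function.update_self]
    ring
  | m + 1 =>
    rw [pbinOn_erase_succ (a := i) hi, hcongr, hcongr, Function.update_self]

/-- the stationarity condition at an interior maximiser -/
lemma stationary_sum (hi : i ∈ A)
    (hp1 : ∀ j, p j ∈ Set.Icc (0:ℝ) 1) (hpA : ∀ j ∈ A, 0 < p j ∧ p j < 1)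
    (hmax : IsMaxOn (hnatOn s A) {q : Fin s → ℝ | ∀ j, q j ∈ Set.Icc (0:ℝ) 1} p) :
    ∑ m ∈ Finset.range A.card, pbinOn s (A.erase i) p m *
      (Real.log (pbinOn s A p (m + 1)) - Real.log (pbinOn s A p m)) = 0 := by
  classical
  set n := A.card with hn
  have hn1 : 1 ≤ n := Finset.card_pos.2 ⟨i, hi⟩
  set u : ℕ → ℝ := fun m => pbinOn s (A.erase i) p m with hu
  set v : ℕ → ℝ := fun k => match k with | 0 => (0:ℝ) | m + 1 => u m with hv
  set f : ℝ → ℝ := fun x => ∑ k ∈ Finset.range (n + 1),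
    Real.negMulLog ((1 - x) * u k + x * v k) with hf
  have hfval : ∀ x, hnatOn s A (Function.update p i x) = f x := by
    intro x
    rw [hnatOn, hf]
    refine Finset.sum_congr rfl fun k _ => ?_
    rw [pbinOn_update hi x k]
  have hq : ∀ k, (1 - p i) * u k + p i * v k = pbinOn s A p k := by
    intro k
    have h := pbinOn_update (p := p) hi (p i) k
    rw [Function.update_eq_self] at h
    exact h.symm
  have hqpos : ∀ k ∈ Finset.range (n + 1), 0 < (1 - p i) * u k + p i * v k := by
    intro k hk
    rw [hq]
    exact pbinOn_pos hpA k (Nat.lt_succ_iff.1 (Finset.mem_range.1 hk))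
  have hder : HasDerivAt f (∑ k ∈ Finset.range (n + 1),
      (-Real.log ((1 - p i) * u k + p i * v k) - 1) * (v k - u k)) (p i) := by
    rw [hf]
    refine HasDerivAt.fun_sum fun k hk => ?_
    have h1 : HasDerivAt (fun y : ℝ => (1 - y) * u k + y * v k) (v k - u k) (p i) := by
      have ha : HasDerivAt (fun y : ℝ => (1 - y) * u k) (-u k) (p i) := by
        simpa using ((hasDerivAt_id (p i)).const_sub 1).mul_const (u k)
      have hb : HasDerivAt (fun y : ℝ => y * v k) (v k) (p i) := by
        simpa using (hasDerivAt_id (p i)).mul_const (v k)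
      have heq : v k - u k = -u k + v k := by ring
      rw [heq]
      exact ha.add hb
    have h2 := (Real.hasDerivAt_negMulLog (ne_of_gt (hqpos k hk))).comp (p i) h1
    simpa [Function.comp_def] using h2
  have hlocal : IsLocalMax f (p i) := by
    have hmem : Set.Ioo (0:ℝ) 1 ∈ nhds (p i) :=
      Ioo_mem_nhds (hpA i hi).1 (hpA i hi).2
    refine Filter.eventually_of_mem hmem fun x hx => ?_
    have hx' : Function.update p i x ∈ {q : Fin s → ℝ | ∀ j, q j ∈ Set.Icc (0:ℝ) 1} := by
      intro j
      rcases eq_or_ne j i with rfl | hji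
      · rw [Function.update_self]; exact ⟨hx.1.le, hx.2.le⟩
      · rw [Function.update_of_ne hji]; exact hp1 j
    calc f x = hnatOn s A (Function.update p i x) := (hfval x).symm
      _ ≤ hnatOn s A p := hmax hx'
      _ = f (p i) := by rw [← hfval (p i), Function.update_eq_self]
  have hderiv0 : (∑ k ∈ Finset.range (n + 1),
      (-Real.log ((1 - p i) * u k + p i * v k) - 1) * (v k - u k)) = 0 := by
    rw [← hder.deriv]
    exact hlocal.deriv_eq_zero
  -- massage
  set L : ℕ → ℝ := fun k => Real.log (pbinOn s A p k) with hL
  have hexp : ∀ k, (-Real.log ((1 - p i) * u k + p i * v k) - 1) * (v k - u k)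
      = (u k * L k - v k * L k) + (u k - v k) := by
    intro k
    rw [hq k]
    ring
  rw [Finset.sum_congr rfl fun k _ => hexp k] at hderiv0
  rw [Finset.sum_add_distrib, Finset.sum_sub_distrib, Finset.sum_sub_distrib] at hderiv0
  have hun : u n = 0 := by
    rw [hu]
    exact pbinOn_eq_zero (by rw [Finset.card_erase_of_mem hi]; omega)
  have hv0 : v 0 = 0 := rfl
  have s1 : ∑ k ∈ Finset.range (n + 1), v k * L k
      = ∑ m ∈ Finset.range n, u m * L (m + 1) := by
    rw [Finset.sum_range_succ' (fun k => v k * L k) n]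
    simp [hv]
  have s2 : ∑ k ∈ Finset.range (n + 1), u k * L k
      = ∑ m ∈ Finset.range n, u m * L m := by
    rw [Finset.sum_range_succ, hun]
    simp
  have s3 : ∑ k ∈ Finset.range (n + 1), v k
      = ∑ m ∈ Finset.range n, u m := by
    rw [Finset.sum_range_succ' v n]
    simp [hv]
  have s4 : ∑ k ∈ Finset.range (n + 1), u k
      = ∑ m ∈ Finset.range n, u m := by
    rw [Finset.sum_range_succ, hun, add_zero]
  rw [s1, s2, s3, s4] at hderiv0
  have goal_eq : ∑ m ∈ Finset.range n, u m * (L (m + 1) - L m)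
      = ∑ m ∈ Finset.range n, u m * L (m + 1) - ∑ m ∈ Finset.range n, u m * L m := by
    rw [← Finset.sum_sub_distrib]
    exact Finset.sum_congr rfl fun m _ => by ring
  rw [goal_eq]
  linarith [hderiv0]

lemma erase_sum_split (hb : b ∈ A) (hc : c ∈ A.erase b) {n' : ℕ}
    (hn' : A.card = n' + 1) (d : ℕ → ℝ) :
    ∑ m ∈ Finset.range A.card, pbinOn s (A.erase b) p m * d m
      = (1 - p c) * (∑ m ∈ Finset.range n', pbinOn s ((A.erase b).erase c) p m * d m)
        + p c * (∑ m ∈ Finset.range n', pbinOn s ((A.erase b).erase c) p m * d (m + 1)) := by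
  set R : ℕ → ℝ := fun m => pbinOn s ((A.erase b).erase c) p m with hR
  have hcardb : (A.erase b).card = n' := by rw [Finset.card_erase_of_mem hb]; omega
  have hn'1 : 1 ≤ n' := by
    have := Finset.card_pos.2 ⟨c, hc⟩
    omega
  have hRn' : R n' = 0 := by
    rw [hR]
    exact pbinOn_eq_zero (by rw [Finset.card_erase_of_mem hc, hcardb]; omega)
  have hu0 : pbinOn s (A.erase b) p 0 = (1 - p c) * R 0 :=
    pbinOn_erase_zero (a := c) hc
  have huS : ∀ m, pbinOn s (A.erase b) p (m + 1) = (1 - p c) * R (m + 1) + p c * R m :=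
    fun m => pbinOn_erase_succ (a := c) hc
  obtain ⟨n'', hn''⟩ : ∃ n'', n' = n'' + 1 := ⟨n' - 1, by omega⟩
  have step1 : ∑ m ∈ Finset.range A.card, pbinOn s (A.erase b) p m * d m
      = ∑ m ∈ Finset.range n', pbinOn s (A.erase b) p (m + 1) * d (m + 1)
          + pbinOn s (A.erase b) p 0 * d 0 := by
    rw [hn', Finset.sum_range_succ' (fun m => pbinOn s (A.erase b) p m * d m) n']
  have step2 : ∑ m ∈ Finset.range n', pbinOn s (A.erase b) p (m + 1) * d (m + 1)
      = (1 - p c) * (∑ m ∈ Finset.range n', R (m + 1) * d (m + 1))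
        + p c * (∑ m ∈ Finset.range n', R m * d (m + 1)) := by
    rw [Finset.mul_sum, Finset.mul_sum, ← Finset.sum_add_distrib]
    refine Finset.sum_congr rfl fun m _ => ?_
    rw [huS m]
    ring
  have step3 : ∑ m ∈ Finset.range n', R m * d m
      = ∑ m ∈ Finset.range n', R (m + 1) * d (m + 1) + R 0 * d 0 := by
    conv_lhs => rw [hn'']
    rw [Finset.sum_range_succ' (fun m => R m * d m) n'']
    congr 1
    rw [hn'', Finset.sum_range_succ, ← hn'', hRn']
    simp
  rw [step1, step2, hu0, step3]
  ring

lemma eq_of_interior_max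
    (hp1 : ∀ j, p j ∈ Set.Icc (0:ℝ) 1) (hpA : ∀ j ∈ A, 0 < p j ∧ p j < 1)
    (hmax : IsMaxOn (hnatOn s A) {q : Fin s → ℝ | ∀ j, q j ∈ Set.Icc (0:ℝ) 1} p) :
    ∀ i ∈ A, ∀ j ∈ A, p i = p j := by
  intro i hi j hj
  by_contra hne
  have hij : i ≠ j := fun h => hne (by rw [h])
  set n := A.card with hn
  have hn2 : 2 ≤ n := Finset.one_lt_card.2 ⟨i, hi, j, hj, hij⟩
  obtain ⟨n', hn'⟩ : ∃ n', n = n' + 1 := ⟨n - 1, by omega⟩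
  set L : ℕ → ℝ := fun k => Real.log (pbinOn s A p k) with hL
  set d : ℕ → ℝ := fun m => L (m + 1) - L m with hd
  set r : ℕ → ℝ := fun m => pbinOn s ((A.erase i).erase j) p m with hr
  have hji : j ∈ A.erase i := Finset.mem_erase.2 ⟨hij.symm, hj⟩
  have hij' : i ∈ A.erase j := Finset.mem_erase.2 ⟨hij, hi⟩
  set Aa : ℝ := ∑ m ∈ Finset.range n', r m * d m with hAa
  set B : ℝ := ∑ m ∈ Finset.range n', r m * d (m + 1) with hB
  have hSi : (1 - p j) * Aa + p j * B = 0 := by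
    rw [hAa, hB, ← erase_sum_split hi hji hn' d]
    exact stationary_sum hi hp1 hpA hmax
  have hSj : (1 - p i) * Aa + p i * B = 0 := by
    have hcomm : (A.erase j).erase i = (A.erase i).erase j := Finset.erase_right_comm
    rw [hAa, hB]
    have := erase_sum_split (p := p) hj hij' hn' d
    rw [hcomm] at this
    rw [← this]
    exact stationary_sum hj hp1 hpA hmax
  have h0 : (p j - p i) * (B - Aa) = 0 := by linear_combination hSi - hSj
  have hBA : B - Aa = 0 := by
    rcases mul_eq_zero.1 h0 with h | h
    · exact absurd (by linarith : p i = p j) hne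
    · exact h
  have hneg : ∀ m ∈ Finset.range n', r m * (d (m + 1) - d m) < 0 := by
    intro m hm
    have hmlt : m < n' := Finset.mem_range.1 hm
    have hrpos : 0 < r m := by
      rw [hr]
      refine pbinOn_pos (fun x hx => hpA x (Finset.mem_of_mem_erase (Finset.mem_of_mem_erase hx)))
        m ?_
      rw [Finset.card_erase_of_mem hji, Finset.card_erase_of_mem hi]
      omega
    have hq : ∀ l ≤ n, 0 < pbinOn s A p l := fun l hl => pbinOn_pos hpA l hl
    have hlc := pbinOn_strict_lc hpA m (by omega)
    have hm0 : 0 < pbinOn s A p m := hq m (by omega)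
    have hm1 : 0 < pbinOn s A p (m + 1) := hq (m + 1) (by omega)
    have hm2 : 0 < pbinOn s A p (m + 2) := hq (m + 2) (by omega)
    have hlog : L m + L (m + 2) < 2 * L (m + 1) := by
      have := Real.log_lt_log (mul_pos hm0 hm2) hlc
      rw [Real.log_mul (ne_of_gt hm0) (ne_of_gt hm2), Real.log_pow] at this
      push_cast at this
      simp only [hL]
      linarith
    have hdd : d (m + 1) - d m < 0 := by
      simp only [hd]
      linarith
    exact mul_neg_of_pos_of_neg hrpos hdd
  have hsum : B - Aa < 0 := by
    have : B - Aa = ∑ m ∈ Finset.range n', r m * (d (m + 1) - d m) := by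
      rw [hB, hAa, ← Finset.sum_sub_distrib]
      exact Finset.sum_congr rfl fun m _ => by ring
    rw [this]
    have hne' : (Finset.range n').Nonempty := Finset.nonempty_range_iff.2 (by omega)
    calc ∑ m ∈ Finset.range n', r m * (d (m + 1) - d m)
        < ∑ m ∈ Finset.range n', (0:ℝ) := Finset.sum_lt_sum_of_nonempty hne' hneg
      _ = 0 := Finset.sum_const_zero
  linarith

lemma sum_bernstein' (m : ℕ) (t : ℝ) :
    ∑ j ∈ Finset.range (m + 1), (m.choose j : ℝ) * t ^ j * (1 - t) ^ (m - j) = 1 := by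
  have h := add_pow t (1 - t) m
  have h2 : t + (1 - t) = 1 := by ring
  rw [h2, one_pow] at h
  calc ∑ j ∈ Finset.range (m + 1), (m.choose j : ℝ) * t ^ j * (1 - t) ^ (m - j)
      = ∑ j ∈ Finset.range (m + 1), t ^ j * (1 - t) ^ (m - j) * (m.choose j : ℝ) :=
        Finset.sum_congr rfl fun j _ => by ring
    _ = 1 := h.symm

lemma phi_half (m : ℕ) : Phi m (1 / 2) = 0 := by
  rw [Phi]
  have h1 : Real.log (1/2 : ℝ) - Real.log (1 - 1/2) = 0 := by norm_num
  rw [h1, zero_add]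
  set f : ℕ → ℝ := fun j => (m.choose j : ℝ) * (1/2) ^ j * (1 - 1/2) ^ (m - j)
      * (Real.log ((m + 1 - j : ℕ) : ℝ) - Real.log ((j + 1 : ℕ) : ℝ)) with hf
  have hrefl := Finset.sum_range_reflect f (m + 1)
  have hcongr : ∀ j ∈ Finset.range (m + 1), f (m + 1 - 1 - j) = - f j := by
    intro j hj
    have hjm : j ≤ m := Nat.lt_succ_iff.1 (Finset.mem_range.1 hj)
    have e0 : m + 1 - 1 - j = m - j := by omega
    have e1 : m.choose (m - j) = m.choose j := Nat.choose_symm hjm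
    have e2 : m + 1 - (m - j) = j + 1 := by omega
    have e3 : m - (m - j) = j := by omega
    have e5 : m - j + 1 = m + 1 - j := by omega
    rw [hf]
    simp only [e0, e1, e2, e3, e5]
    ring
  rw [Finset.sum_congr rfl hcongr] at hrefl
  rw [Finset.sum_neg_distrib] at hrefl
  have : ∑ j ∈ Finset.range (m + 1), f j = 0 := by linarith [hrefl]
  exact this

/-- `a * (log (a+1) - log a) ≤ 1` for natural `a ≥ 1` -/
lemma nat_log_diff_le (a : ℕ) (ha : 1 ≤ a) :
    (a : ℝ) * (Real.log ((a + 1 : ℕ) : ℝ) - Real.log ((a : ℕ) : ℝ)) ≤ 1 := by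
  have ha' : (0:ℝ) < (a:ℝ) := by exact_mod_cast ha
  have hpos : (0:ℝ) < ((a:ℝ) + 1) / a := by positivity
  have h := Real.log_le_sub_one_of_pos hpos
  rw [Real.log_div (by positivity) (ne_of_gt ha')] at h
  have h2 : ((a:ℝ) + 1) / a - 1 = 1 / a := by field_simp; ring
  rw [h2] at h
  push_cast
  calc (a:ℝ) * (Real.log ((a:ℝ) + 1) - Real.log a) ≤ (a:ℝ) * (1 / a) :=
        mul_le_mul_of_nonneg_left h ha'.le
    _ = 1 := by field_simp

lemma bern_aux1 (m : ℕ) (x : ℝ) (hx : x ≠ 0) :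
    ∑ j ∈ Finset.range m, (m.choose (j + 1) : ℝ) * x ^ j * (1 - x) ^ (m - j - 1)
      = (1 - (1 - x) ^ m) / x := by
  rw [eq_div_iff hx]
  have key : ∀ j ∈ Finset.range m,
      ((m.choose (j + 1) : ℝ) * x ^ j * (1 - x) ^ (m - j - 1)) * x
        = (m.choose (j + 1) : ℝ) * x ^ (j + 1) * (1 - x) ^ (m - (j + 1)) := by
    intro j hj
    rw [Nat.sub_sub, pow_succ]
    ring_nf
  rw [Finset.sum_mul, Finset.sum_congr rfl key]
  have hb := sum_bernstein' m x
  rw [Finset.sum_range_succ' (fun j => (m.choose j : ℝ) * x ^ j * (1 - x) ^ (m - j)) m] at hb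
  simp only [Nat.choose_zero_right, Nat.cast_one, pow_zero, Nat.sub_zero, one_mul, mul_one] at hb
  linarith

lemma bern_aux2 (m : ℕ) (x : ℝ) (hx : (1 - x) ≠ 0) :
    ∑ j ∈ Finset.range m, (m.choose j : ℝ) * x ^ j * (1 - x) ^ (m - j - 1)
      = (1 - x ^ m) / (1 - x) := by
  rw [eq_div_iff hx]
  have key : ∀ j ∈ Finset.range m,
      ((m.choose j : ℝ) * x ^ j * (1 - x) ^ (m - j - 1)) * (1 - x)
        = (m.choose j : ℝ) * x ^ j * (1 - x) ^ (m - j) := by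
    intro j hj
    have hjm : j < m := Finset.mem_range.1 hj
    set l := m - j - 1 with hldef
    have e : m - j = l + 1 := by omega
    rw [e, pow_succ]
    ring
  rw [Finset.sum_mul, Finset.sum_congr rfl key]
  have hb := sum_bernstein' m x
  rw [Finset.sum_range_succ (fun j => (m.choose j : ℝ) * x ^ j * (1 - x) ^ (m - j)) m] at hb
  simp only [Nat.choose_self, Nat.cast_one, Nat.sub_self, pow_zero, one_mul, mul_one] at hb
  linarith

noncomputable def PhiD (m : ℕ) (x : ℝ) : ℝ :=
  x⁻¹ - (1 - x)⁻¹ * (-1) +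
    ∑ j ∈ Finset.range (m + 1),
      (((m.choose j : ℝ) * ((j : ℝ) * x ^ (j - 1))) * (1 - x) ^ (m - j)
        + ((m.choose j : ℝ) * x ^ j) * (((m - j : ℕ) : ℝ) * (1 - x) ^ (m - j - 1) * (-1)))
        * (Real.log ((m + 1 - j : ℕ) : ℝ) - Real.log ((j + 1 : ℕ) : ℝ))

lemma hasDerivAt_Phi (m : ℕ) {x : ℝ} (hx0 : 0 < x) (hx1 : x < 1) :
    HasDerivAt (Phi m) (PhiD m x) x := by
  have h1t : (1:ℝ) - x ≠ 0 := by intro h; linarith [h]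
  unfold Phi PhiD
  refine HasDerivAt.add (HasDerivAt.sub (Real.hasDerivAt_log (ne_of_gt hx0)) ?_)
    (HasDerivAt.fun_sum fun j _ => ?_)
  · have hcomp := (Real.hasDerivAt_log h1t).comp x ((hasDerivAt_id x).const_sub 1)
    simpa [Function.comp_def] using hcomp
  · have hp2 : HasDerivAt (fun t : ℝ => (1 - t) ^ (m - j))
        ((((m - j : ℕ) : ℝ)) * (1 - x) ^ (m - j - 1) * (-1)) x := by
      have := (hasDerivAt_pow (m - j) (1 - x)).comp x ((hasDerivAt_id x).const_sub 1)
      simpa [Function.comp_def] using this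
    have hp1 : HasDerivAt (fun t : ℝ => (m.choose j : ℝ) * t ^ j)
        ((m.choose j : ℝ) * ((j : ℝ) * x ^ (j - 1))) x :=
      HasDerivAt.const_mul _ (hasDerivAt_pow j x)
    exact (hp1.mul hp2).mul_const _

lemma PhiD_pos (m : ℕ) {x : ℝ} (hx0 : 0 < x) (hx1 : x < 1) : 0 < PhiD m x := by
  have h1x : (0:ℝ) < 1 - x := by linarith
  set c : ℕ → ℝ := fun j => Real.log ((m + 1 - j : ℕ) : ℝ) - Real.log ((j + 1 : ℕ) : ℝ)
    with hc
  set g1 : ℕ → ℝ := fun j => (m.choose j : ℝ) * ((j : ℝ) * x ^ (j - 1)) * (1 - x) ^ (m - j) * c j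
    with hg1
  set g2 : ℕ → ℝ := fun j =>
      (m.choose j : ℝ) * (((m - j : ℕ) : ℝ)) * x ^ j * (1 - x) ^ (m - j - 1) * c j with hg2
  have hsplit : PhiD m x = x⁻¹ + (1 - x)⁻¹ +
      (∑ j ∈ Finset.range (m + 1), g1 j - ∑ j ∈ Finset.range (m + 1), g2 j) := by
    rw [PhiD, ← Finset.sum_sub_distrib]
    rw [Finset.sum_congr rfl fun j _ => show _ = g1 j - g2 j by rw [hg1, hg2]; ring]
    ring
  have hS1 : ∑ j ∈ Finset.range (m + 1), g1 j = ∑ j ∈ Finset.range m, g1 (j + 1) := by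
    rw [Finset.sum_range_succ' g1 m]
    have : g1 0 = 0 := by rw [hg1]; simp
    rw [this, add_zero]
  have hS2 : ∑ j ∈ Finset.range (m + 1), g2 j = ∑ j ∈ Finset.range m, g2 j := by
    rw [Finset.sum_range_succ g2 m]
    have : g2 m = 0 := by rw [hg2]; simp
    rw [this, add_zero]
  -- the key per-index bound
  have key : ∀ j ∈ Finset.range m, g1 (j + 1) - g2 j ≥
      -(x ^ j * (1 - x) ^ (m - j - 1) * ((m.choose (j + 1) : ℝ) + (m.choose j : ℝ))) := by
    intro j hj
    have hjm : j < m := Finset.mem_range.1 hj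
    have hCa : (0:ℝ) ≤ (m.choose (j + 1) : ℝ) := Nat.cast_nonneg _
    have hCb : (0:ℝ) ≤ (m.choose j : ℝ) := Nat.cast_nonneg _
    have hP : (0:ℝ) ≤ x ^ j * (1 - x) ^ (m - j - 1) := by positivity
    -- rewrite g1 (j+1)
    have e1 : (j + 1) - 1 = j := by omega
    have e2 : m - (j + 1) = m - j - 1 := by omega
    have e3 : (m + 1 - (j + 1) : ℕ) = (m - j : ℕ) := by omega
    have hg1j : g1 (j + 1) = (m.choose (j + 1) : ℝ) * (((j:ℝ) + 1)) * (c (j + 1))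
        * (x ^ j * (1 - x) ^ (m - j - 1)) := by
      rw [hg1]
      simp only [e1, e2]
      push_cast
      ring
    have hg2j : g2 j = (m.choose j : ℝ) * (((m - j : ℕ) : ℝ)) * (c j)
        * (x ^ j * (1 - x) ^ (m - j - 1)) := by
      rw [hg2]; ring
    have hwcast : (m.choose (j + 1) : ℝ) * ((j:ℝ) + 1)
        = (m.choose j : ℝ) * (((m - j : ℕ) : ℝ)) := by
      have := Nat.choose_succ_right_eq m j
      have hcast : ((m.choose (j + 1) * (j + 1) : ℕ) : ℝ) = ((m.choose j * (m - j) : ℕ) : ℝ) := by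
        exact_mod_cast congrArg (Nat.cast (R := ℝ)) this
      push_cast at hcast
      linarith [hcast]
    have hlog1 := nat_log_diff_le (m - j) (by omega)
    rw [show (m - j) + 1 = m + 1 - j by omega] at hlog1
    have hlog2 := nat_log_diff_le (j + 1) (by omega)
    -- c (j+1) = log (m - j) - log (j + 2), c j = log (m + 1 - j) - log (j + 1)
    have hcj1 : c (j + 1) = Real.log ((m - j : ℕ) : ℝ) - Real.log ((j + 1 + 1 : ℕ) : ℝ) := by
      rw [hc]; simp only [e3]
    have hcj : c j = Real.log ((m + 1 - j : ℕ) : ℝ) - Real.log ((j + 1 : ℕ) : ℝ) := by rw [hc]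
    have hbound : (m.choose (j + 1) : ℝ) * (((j:ℝ) + 1)) * (c (j + 1))
        - (m.choose j : ℝ) * (((m - j : ℕ) : ℝ)) * (c j)
        ≥ -((m.choose (j + 1) : ℝ) + (m.choose j : ℝ)) := by
      have h1' := mul_le_mul_of_nonneg_left hlog1 hCb
      have h2' := mul_le_mul_of_nonneg_left hlog2 hCa
      rw [hcj1, hcj]
      push_cast at h1' h2' hwcast ⊢
      rw [hwcast]
      have hEq := congrArg
        (fun z => z * (Real.log ((j:ℝ) + 1 + 1) - Real.log ((j:ℝ) + 1))) hwcast
      linarith [h1', h2', hEq]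
    rw [hg1j, hg2j]
    calc (m.choose (j + 1) : ℝ) * ((j:ℝ) + 1) * c (j + 1) * (x ^ j * (1 - x) ^ (m - j - 1))
          - (m.choose j : ℝ) * (((m - j : ℕ) : ℝ)) * c j * (x ^ j * (1 - x) ^ (m - j - 1))
        = ((m.choose (j + 1) : ℝ) * ((j:ℝ) + 1) * c (j + 1)
            - (m.choose j : ℝ) * (((m - j : ℕ) : ℝ)) * c j) * (x ^ j * (1 - x) ^ (m - j - 1)) := by
          ring
      _ ≥ (-((m.choose (j + 1) : ℝ) + (m.choose j : ℝ))) * (x ^ j * (1 - x) ^ (m - j - 1)) :=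
          mul_le_mul_of_nonneg_right hbound hP
      _ = -(x ^ j * (1 - x) ^ (m - j - 1) * ((m.choose (j + 1) : ℝ) + (m.choose j : ℝ))) := by
          ring
  have hsum : ∑ j ∈ Finset.range m, g1 (j + 1) - ∑ j ∈ Finset.range m, g2 j ≥
      -((1 - (1 - x) ^ m) / x + (1 - x ^ m) / (1 - x)) := by
    have h1 := Finset.sum_le_sum key
    have hcomb : ∑ j ∈ Finset.range m, g1 (j + 1) - ∑ j ∈ Finset.range m, g2 j
        = ∑ j ∈ Finset.range m, (g1 (j + 1) - g2 j) := (Finset.sum_sub_distrib ..).symm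
    have h2 : ∑ j ∈ Finset.range m,
        -(x ^ j * (1 - x) ^ (m - j - 1) * ((m.choose (j + 1) : ℝ) + (m.choose j : ℝ)))
        = -((1 - (1 - x) ^ m) / x + (1 - x ^ m) / (1 - x)) := by
      rw [← bern_aux1 m x (ne_of_gt hx0), ← bern_aux2 m x (ne_of_gt h1x)]
      rw [← Finset.sum_add_distrib, ← Finset.sum_neg_distrib]
      exact Finset.sum_congr rfl fun j _ => by ring
    rw [hcomb, ← h2]
    exact h1
  rw [hsplit, hS1, hS2]
  have e1 : x⁻¹ - (1 - (1 - x) ^ m) / x = (1 - x) ^ m / x := by field_simp; ring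
  have e2 : (1 - x)⁻¹ - (1 - x ^ m) / (1 - x) = x ^ m / (1 - x) := by
    field_simp; ring
  have hpos : (0:ℝ) < (1 - x) ^ m / x + x ^ m / (1 - x) := by positivity
  linarith [hsum, hpos, e1, e2]

lemma phi_strictMono (m : ℕ) : StrictMonoOn (Phi m) (Set.Ioo (0:ℝ) 1) := by
  refine strictMonoOn_of_deriv_pos (convex_Ioo 0 1) ?_ ?_
  · intro x hx
    exact (hasDerivAt_Phi m hx.1 hx.2).continuousAt.continuousWithinAt
  · intro x hx
    rw [interior_Ioo] at hx
    rw [(hasDerivAt_Phi m hx.1 hx.2).deriv]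
    exact PhiD_pos m hx.1 hx.2

lemma eq_half_of_phi_zero (m : ℕ) {t : ℝ} (ht : t ∈ Set.Ioo (0:ℝ) 1) (h : Phi m t = 0) :
    t = 1 / 2 :=
  (phi_strictMono m).injOn ht (by norm_num : (1/2:ℝ) ∈ Set.Ioo (0:ℝ) 1)
    (by rw [h, phi_half])

lemma phi_eq_zero_of_diag_max (hi : i ∈ A) (hm : A.card = m + 1)
    (hp1 : ∀ j, p j ∈ Set.Icc (0:ℝ) 1) (hpA : ∀ j ∈ A, 0 < p j ∧ p j < 1)
    (ht : ∀ j ∈ A, p j = t)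
    (hmax : IsMaxOn (hnatOn s A) {q : Fin s → ℝ | ∀ j, q j ∈ Set.Icc (0:ℝ) 1} p) :
    Phi m t = 0 := by
  have ht0 : 0 < t := by
    have := (hpA i hi).1; rw [ht i hi] at this; exact this
  have ht1 : t < 1 := by
    have := (hpA i hi).2; rw [ht i hi] at this; exact this
  have hstat := stationary_sum hi hp1 hpA hmax
  have hterase : ∀ x ∈ A.erase i, p x = t := fun x hx => ht x (Finset.mem_of_mem_erase hx)
  have hcarde : (A.erase i).card = m := by rw [Finset.card_erase_of_mem hi, hm]; omega
  have hu : ∀ j, pbinOn s (A.erase i) p j = (m.choose j : ℝ) * t ^ j * (1 - t) ^ (m - j) := by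
    intro j
    rw [pbinOn_const hterase j, hcarde]
  have hqpos : ∀ l ≤ A.card, 0 < pbinOn s A p l := pbinOn_pos hpA
  have hd : ∀ j < A.card,
      Real.log (pbinOn s A p (j + 1)) - Real.log (pbinOn s A p j)
        = Real.log t - Real.log (1 - t)
          + (Real.log ((m + 1 - j : ℕ) : ℝ) - Real.log ((j + 1 : ℕ) : ℝ)) := by
    intro j hj
    have hprod : pbinOn s A p (j + 1) * ((j + 1 : ℕ) : ℝ) * (1 - t)
        = pbinOn s A p j * ((A.card - j : ℕ) : ℝ) * t := by
      rw [pbinOn_const ht (j + 1), pbinOn_const ht j]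
      have hc := Nat.choose_succ_right_eq A.card j
      have hcR : ((A.card.choose (j+1) : ℝ)) * ((j + 1 : ℕ) : ℝ)
          = (A.card.choose j : ℝ) * ((A.card - j : ℕ) : ℝ) := by exact_mod_cast hc
      have e : A.card - j = (A.card - (j + 1)) + 1 := by omega
      rw [e] at hcR
      rw [e, pow_succ, pow_succ]
      push_cast at hcR ⊢
      linear_combination (t ^ j * t * (1 - t) ^ (A.card - (j + 1)) * (1 - t)) * hcR
    have hq1 : 0 < pbinOn s A p (j + 1) := hqpos (j + 1) (by omega)
    have hq0 : 0 < pbinOn s A p j := hqpos j (by omega)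
    have hj1 : (0:ℝ) < ((j + 1 : ℕ) : ℝ) := by positivity
    have hnm : (0:ℝ) < ((A.card - j : ℕ) : ℝ) := by
      have : 1 ≤ A.card - j := by omega
      exact_mod_cast Nat.lt_of_lt_of_le Nat.zero_lt_one this
    have h1t : (0:ℝ) < 1 - t := by linarith
    have hlog := congrArg Real.log hprod
    rw [Real.log_mul (by positivity) (ne_of_gt h1t),
      Real.log_mul (ne_of_gt hq1) (ne_of_gt hj1),
      Real.log_mul (by positivity) (ne_of_gt ht0),
      Real.log_mul (ne_of_gt hq0) (ne_of_gt hnm)] at hlog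
    have hmj : (A.card - j : ℕ) = (m + 1 - j : ℕ) := by omega
    rw [hmj] at hlog
    linarith
  -- rewrite the stationarity sum
  have hsum : ∑ l ∈ Finset.range A.card, pbinOn s (A.erase i) p l *
      (Real.log (pbinOn s A p (l + 1)) - Real.log (pbinOn s A p l))
      = Phi m t := by
    have : ∀ l ∈ Finset.range A.card,
        pbinOn s (A.erase i) p l *
          (Real.log (pbinOn s A p (l + 1)) - Real.log (pbinOn s A p l))
        = (m.choose l : ℝ) * t ^ l * (1 - t) ^ (m - l) * (Real.log t - Real.log (1 - t))
          + (m.choose l : ℝ) * t ^ l * (1 - t) ^ (m - l)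
            * (Real.log ((m + 1 - l : ℕ) : ℝ) - Real.log ((l + 1 : ℕ) : ℝ)) := by
      intro l hl
      rw [hu l, hd l (Finset.mem_range.1 hl)]
      ring
    rw [Finset.sum_congr rfl this, Finset.sum_add_distrib]
    have h1 : ∑ l ∈ Finset.range A.card,
        (m.choose l : ℝ) * t ^ l * (1 - t) ^ (m - l) * (Real.log t - Real.log (1 - t))
        = Real.log t - Real.log (1 - t) := by
      rw [← Finset.sum_mul]
      rw [hm, sum_bernstein' m t, one_mul]
    rw [h1, Phi, hm]
  rw [hsum] at hstat
  exact hstat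

lemma hnat_boundary_erase (hi : i ∈ A) (h : p i = 0 ∨ p i = 1) :
    hnatOn s A p = hnatOn s (A.erase i) p := by
  obtain ⟨n', hn'⟩ : ∃ n', A.card = n' + 1 :=
    ⟨A.card - 1, by have := Finset.card_pos.2 ⟨i, hi⟩; omega⟩
  have hce : (A.erase i).card = n' := by rw [Finset.card_erase_of_mem hi, hn']; omega
  have hu0 : pbinOn s (A.erase i) p (n' + 1) = 0 := pbinOn_eq_zero (by omega)
  rcases h with h | h
  · have hval : ∀ k, pbinOn s A p k = pbinOn s (A.erase i) p k := by
      intro k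
      match k with
      | 0 => rw [pbinOn_erase_zero hi, h]; ring
      | k + 1 => rw [pbinOn_erase_succ hi, h]; ring
    rw [hnatOn, hnatOn, hce, hn']
    rw [Finset.sum_range_succ]
    rw [Finset.sum_congr rfl fun k _ => by rw [hval k]]
    rw [hval (n' + 1), hu0]
    simp
  · have hval0 : pbinOn s A p 0 = 0 := by rw [pbinOn_erase_zero hi, h]; ring
    have hvalS : ∀ k, pbinOn s A p (k + 1) = pbinOn s (A.erase i) p k := by
      intro k
      rw [pbinOn_erase_succ hi, h]
      ring
    rw [hnatOn, hnatOn, hce, hn']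
    rw [Finset.sum_range_succ' (fun k => Real.negMulLog (pbinOn s A p k)) (n' + 1)]
    rw [hval0]
    rw [Finset.sum_congr rfl fun k _ => by rw [hvalS k]]
    simp

lemma hnat_const_half (hhalf : ∀ j ∈ A, p j = 1 / 2) :
    hnatOn s A p = bH A.card := by
  rw [hnatOn, bH]
  refine Finset.sum_congr rfl fun k _ => ?_
  rw [pbinOn_const hhalf k, bq]
  norm_num

lemma continuous_hnatOn (A : Finset (Fin s)) :
    Continuous (fun p : Fin s → ℝ => hnatOn s A p) := by
  unfold hnatOn
  refine continuous_finset_sum _ fun k _ => ?_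
  have hpb : Continuous (fun p : Fin s → ℝ => pbinOn s A p k) := by
    unfold pbinOn
    refine continuous_finset_sum _ fun B _ => ?_
    exact (continuous_finset_prod _ fun i _ => continuous_apply i).mul
      (continuous_finset_prod _ fun j _ => continuous_const.sub (continuous_apply j))
  exact Real.continuous_negMulLog.comp hpb

lemma main_ineq : ∀ (n : ℕ) (A : Finset (Fin s)), A.card = n →
    ∀ p : Fin s → ℝ, (∀ i, p i ∈ Set.Icc (0:ℝ) 1) → hnatOn s A p ≤ bH A.card := by
  intro n
  induction n using Nat.strong_induction_on with
  | _ n IH =>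
    intro A hA p hp
    set cube : Set (Fin s → ℝ) := {q : Fin s → ℝ | ∀ j, q j ∈ Set.Icc (0:ℝ) 1} with hcube
    have hcompact : IsCompact cube := by
      have : cube = Set.univ.pi (fun _ : Fin s => Set.Icc (0:ℝ) 1) := by
        ext q
        simp only [hcube, Set.mem_setOf_eq, Set.mem_univ_pi]
      rw [this]
      exact isCompact_univ_pi fun _ => isCompact_Icc
    have hne : cube.Nonempty := ⟨fun _ => 0, fun j => ⟨le_rfl, zero_le_one⟩⟩
    obtain ⟨q, hqmem, hqmax⟩ :=
      hcompact.exists_isMaxOn hne (continuous_hnatOn A).continuousOn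
    have hple : hnatOn s A p ≤ hnatOn s A q := hqmax hp
    suffices hq : hnatOn s A q ≤ bH A.card by linarith
    by_cases hbdry : ∃ i ∈ A, q i = 0 ∨ q i = 1
    · obtain ⟨i, hi, hqi⟩ := hbdry
      have hn1 : 1 ≤ n := by
        have := Finset.card_pos.2 ⟨i, hi⟩; omega
      have hred : hnatOn s A q = hnatOn s (A.erase i) q := hnat_boundary_erase hi hqi
      have hcard : (A.erase i).card = n - 1 := by
        rw [Finset.card_erase_of_mem hi, hA]
      have h1 : hnatOn s (A.erase i) q ≤ bH (A.erase i).card :=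
        IH (n - 1) (by omega) (A.erase i) hcard q hqmem
      have h2 : bH (n - 1) ≤ bH n := by
        have := bH_mono (n - 1)
        rwa [show n - 1 + 1 = n by omega] at this
      rw [hred, hA]
      rw [hcard] at h1
      linarith
    · push_neg at hbdry
      have hint : ∀ i ∈ A, 0 < q i ∧ q i < 1 := by
        intro i hi
        have h1 := (hqmem i).1
        have h2 := (hqmem i).2
        have h3 := hbdry i hi
        exact ⟨lt_of_le_of_ne h1 (Ne.symm h3.1), lt_of_le_of_ne h2 h3.2⟩
      rcases A.eq_empty_or_nonempty with rfl | ⟨i, hi⟩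
      · have : hnatOn s (∅ : Finset (Fin s)) q = 0 := by
          rw [hnatOn]
          simp [pbinOn_empty]
        rw [this]
        exact bH_nonneg _
      · have htall : ∀ j ∈ A, q j = q i := fun j hj =>
          eq_of_interior_max hqmem hint hqmax j hj i hi
        have hn1 : 1 ≤ n := by have := Finset.card_pos.2 ⟨i, hi⟩; omega
        have hm : A.card = (n - 1) + 1 := by omega
        have hphi : Phi (n - 1) (q i) = 0 :=
          phi_eq_zero_of_diag_max hi hm hqmem hint htall hqmax
        have ht12 : q i = 1 / 2 :=
          eq_half_of_phi_zero (n - 1) ⟨(hint i hi).1, (hint i hi).2⟩ hphi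
        have hhalf : ∀ j ∈ A, q j = 1 / 2 := fun j hj => by rw [htall j hj, ht12]
        rw [hnat_const_half hhalf]

lemma hEnt_le_binomEnt (A : Finset (Fin s)) (p : Fin s → ℝ)
    (hp : ∀ i, p i ∈ Set.Icc (0:ℝ) 1) : hEnt s A p ≤ binomEnt A.card (1 / 2) := by
  rw [hEnt_eq, binomEnt_half_eq]
  gcongr
  exact main_ineq A.card A rfl p hp

lemma hEnt_const_half (A : Finset (Fin s)) :
    hEnt s A (fun _ => (1:ℝ)/2) = binomEnt A.card (1 / 2) := by
  rw [hEnt_eq, binomEnt_half_eq, hnat_const_half (fun j _ => rfl)]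


/-- Capacity region of the `s`-user Multiple Access Adder Channel: the closure
of the convex hull of the union over all product input distributions of the
corresponding rate polyhedra (Ulrey's characterization) equals the single
polyhedron cut out by the constraints `∑_{i ∈ A} R_i ≤ H_{|A|}(1/2)`. -/
theorem capacity_region_adder_channel (s : ℕ) (hs : 1 ≤ s) :
    closure (convexHull ℝ
        (⋃ p ∈ {p : Fin s → ℝ | ∀ i, p i ∈ Set.Icc (0 : ℝ) 1}, ratePoly s p)) =
      {R : Fin s → ℝ | (∀ i, 0 ≤ R i) ∧
        ∀ A : Finset (Fin s), ∑ i ∈ A, R i ≤ binomEnt A.card (1 / 2)} := by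
  classical
  set Q : Set (Fin s → ℝ) := {R : Fin s → ℝ | (∀ i, 0 ≤ R i) ∧
    ∀ A : Finset (Fin s), ∑ i ∈ A, R i ≤ binomEnt A.card (1 / 2)} with hQ
  have hQclosed : IsClosed Q := by
    have hrepr : Q = (⋂ i : Fin s, {R : Fin s → ℝ | 0 ≤ R i}) ∩
        ⋂ A : Finset (Fin s), {R : Fin s → ℝ | ∑ i ∈ A, R i ≤ binomEnt A.card (1 / 2)} := by
      ext R
      simp [hQ, Set.mem_iInter, forall_and]
    rw [hrepr]
    refine IsClosed.inter (isClosed_iInter fun i => ?_) (isClosed_iInter fun A => ?_)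
    · exact isClosed_le continuous_const (continuous_apply i)
    · exact isClosed_le (continuous_finset_sum _ fun i _ => continuous_apply i) continuous_const
  have hQconvex : Convex ℝ Q := by
    intro x hx y hy a b ha hb hab
    constructor
    · intro i
      have : (a • x + b • y) i = a * x i + b * y i := by
        simp [Pi.add_apply, smul_eq_mul]
      rw [this]
      exact add_nonneg (mul_nonneg ha (hx.1 i)) (mul_nonneg hb (hy.1 i))
    · intro A
      have hsum : ∑ i ∈ A, (a • x + b • y) i = a * ∑ i ∈ A, x i + b * ∑ i ∈ A, y i := by
        rw [Finset.mul_sum, Finset.mul_sum, ← Finset.sum_add_distrib]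
        refine Finset.sum_congr rfl fun i _ => ?_
        simp [Pi.add_apply, smul_eq_mul]
      rw [hsum]
      calc a * ∑ i ∈ A, x i + b * ∑ i ∈ A, y i
          ≤ a * binomEnt A.card (1/2) + b * binomEnt A.card (1/2) :=
            add_le_add (mul_le_mul_of_nonneg_left (hx.2 A) ha)
              (mul_le_mul_of_nonneg_left (hy.2 A) hb)
        _ = binomEnt A.card (1/2) := by rw [← add_mul, hab, one_mul]
  apply Set.Subset.antisymm
  · refine closure_minimal (convexHull_min ?_ hQconvex) hQclosed
    rintro R hR
    simp only [Set.mem_iUnion, Set.mem_setOf_eq] at hR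
    obtain ⟨p, hp, hRp⟩ := hR
    exact ⟨hRp.1, fun A => le_trans (hRp.2 A) (hEnt_le_binomEnt A p hp)⟩
  · intro R hR
    apply subset_closure
    apply subset_convexHull
    have hhalf : (fun _ : Fin s => (1:ℝ)/2) ∈ {p : Fin s → ℝ | ∀ i, p i ∈ Set.Icc (0:ℝ) 1} :=
      fun i => ⟨by norm_num, by norm_num⟩
    refine Set.mem_biUnion hhalf ?_
    refine ⟨hR.1, fun A => ?_⟩
    rw [hEnt_const_half A]
    exact hR.2 A
end

section
/- (Strict discrete log-concavity) Let n ≥ 2 and p = (p_1,…,p_n) with 0 < p_i < 1 for all i. Then for every k with 2 ≤ k ≤ n, Δ²_k(log₂ b(k,p)) < 0, i.e., log₂ b(k,p) − 2·log₂ b(k−1,p) + log₂ b(k−2,p) < 0. -/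
open Finset

/-- `b(k,p)`: the Poisson–binomial probability mass function, defined for all
integers `k` (it vanishes for `k < 0` or `k > n`). -/
noncomputable def pbin (n : ℕ) (p : Fin n → ℝ) (k : ℤ) : ℝ :=
  ∑ A ∈ Finset.univ.powerset.filter (fun A : Finset (Fin n) => (A.card : ℤ) = k),
    (∏ i ∈ A, p i) * ∏ j ∈ Aᶜ, (1 - p j)

lemma pbin_eq_zero_of_neg (n : ℕ) (p : Fin n → ℝ) (k : ℤ) (hk : k < 0) : pbin n p k = 0 := by
  unfold pbin
  rw [Finset.sum_eq_zero]
  intro A hA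
  simp only [mem_filter] at hA
  omega

lemma pbin_eq_zero_of_gt (n : ℕ) (p : Fin n → ℝ) (k : ℤ) (hk : (n : ℤ) < k) : pbin n p k = 0 := by
  unfold pbin
  rw [Finset.sum_eq_zero]
  intro A hA
  simp only [mem_filter] at hA
  have := A.card_le_univ
  simp at this
  omega

lemma pbin_nonneg (n : ℕ) (p : Fin n → ℝ) (hp : ∀ i, 0 < p i ∧ p i < 1) (k : ℤ) :
    0 ≤ pbin n p k := by
  apply Finset.sum_nonneg
  intro A _
  apply mul_nonneg
  · exact Finset.prod_nonneg fun i _ => (hp i).1.le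
  · exact Finset.prod_nonneg fun j _ => by linarith [(hp j).2]

lemma pbin_pos (n : ℕ) (p : Fin n → ℝ) (hp : ∀ i, 0 < p i ∧ p i < 1) (k : ℤ)
    (h0 : 0 ≤ k) (hn : k ≤ (n : ℤ)) : 0 < pbin n p k := by
  obtain ⟨B, hB, hBcard⟩ := Finset.exists_subset_card_eq (s := (univ : Finset (Fin n)))
    (n := k.toNat) (by simp; omega)
  apply Finset.sum_pos'
  · intro A _
    apply mul_nonneg
    · exact Finset.prod_nonneg fun i _ => (hp i).1.le
    · exact Finset.prod_nonneg fun j _ => by linarith [(hp j).2]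
  · refine ⟨B, ?_, ?_⟩
    · simp [Finset.mem_filter, hBcard]; omega
    · apply mul_pos
      · exact Finset.prod_pos fun i _ => (hp i).1
      · exact Finset.prod_pos fun j _ => by linarith [(hp j).2]

lemma pbin_ne_zero_range (n : ℕ) (p : Fin n → ℝ) (k : ℤ) (h : pbin n p k ≠ 0) :
    0 ≤ k ∧ k ≤ (n : ℤ) := by
  constructor
  · by_contra h'; exact h (pbin_eq_zero_of_neg n p k (by omega))
  · by_contra h'; exact h (pbin_eq_zero_of_gt n p k (by omega))

lemma powerset_map' {α β : Type*} (f : α ↪ β) (s : Finset α) :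
    (s.map f).powerset = s.powerset.map (Finset.mapEmbedding f).toEmbedding := by
  ext t
  simp only [mem_powerset, mem_map, RelEmbedding.coe_toEmbedding, Finset.mapEmbedding_apply]
  constructor
  · intro h
    obtain ⟨u, hu, rfl⟩ := Finset.subset_map_iff.mp h
    exact ⟨u, hu, rfl⟩
  · rintro ⟨u, hu, rfl⟩
    exact Finset.map_subset_map.mpr hu

lemma last_not_mem_map {n : ℕ} (B : Finset (Fin n)) :
    Fin.last n ∉ B.map Fin.castSuccEmb := by
  simp only [mem_map, Fin.coe_castSuccEmb]
  rintro ⟨y, -, hy⟩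
  exact (Fin.castSucc_lt_last y).ne hy

lemma mem_map_castSucc {n : ℕ} (B : Finset (Fin n)) (y : Fin n) :
    y.castSucc ∈ B.map Fin.castSuccEmb ↔ y ∈ B := by
  simp only [mem_map, Fin.coe_castSuccEmb]
  constructor
  · rintro ⟨a, ha, h⟩
    rwa [Fin.castSucc_injective _ h] at ha
  · intro h; exact ⟨y, h, rfl⟩

lemma compl_map_castSucc {n : ℕ} (B : Finset (Fin n)) :
    (B.map Fin.castSuccEmb)ᶜ = insert (Fin.last n) (Bᶜ.map Fin.castSuccEmb) := by
  ext x
  rcases Fin.eq_castSucc_or_eq_last x with ⟨y, rfl⟩ | rfl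
  · rw [mem_compl, mem_map_castSucc, mem_insert, mem_map_castSucc, mem_compl]
    simp [(Fin.castSucc_lt_last y).ne]
  · simp only [mem_compl, mem_insert]
    exact iff_of_true (last_not_mem_map B) (by simp)

lemma pbin_succ (n : ℕ) (p : Fin (n+1) → ℝ) (k : ℤ) :
    pbin (n+1) p k = (1 - p (Fin.last n)) * pbin n (p ∘ Fin.castSucc) k
      + p (Fin.last n) * pbin n (p ∘ Fin.castSucc) (k - 1) := by
  unfold pbin
  rw [Finset.sum_filter, Finset.sum_filter, Finset.sum_filter]
  rw [Fin.univ_castSuccEmb, Finset.cons_eq_insert,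
    Finset.sum_powerset_insert (last_not_mem_map _)]
  rw [powerset_map', Finset.sum_map, Finset.sum_map, Finset.mul_sum, Finset.mul_sum,
    ← Finset.sum_add_distrib, ← Finset.sum_add_distrib]
  apply Finset.sum_congr rfl
  intro B _
  simp only [RelEmbedding.coe_toEmbedding, Finset.mapEmbedding_apply]
  rw [compl_insert, compl_map_castSucc, Finset.erase_insert (last_not_mem_map _)]
  simp only [Finset.card_insert_of_notMem (last_not_mem_map _), Finset.card_map]
  rw [Finset.prod_insert (last_not_mem_map _), Finset.prod_insert (last_not_mem_map _),
    Finset.prod_map, Finset.prod_map]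
  simp only [Fin.coe_castSuccEmb, Function.comp_apply]
  by_cases h1 : (B.card : ℤ) = k
  · have h2 : ¬ (B.card : ℤ) = k - 1 := by omega
    have h3 : ¬ ((B.card + 1 : ℕ) : ℤ) = k := by push_cast; omega
    rw [if_pos h1, if_pos h1, if_neg h2, if_neg h3]; ring
  · by_cases h2 : (B.card : ℤ) = k - 1
    · have h3 : ((B.card + 1 : ℕ) : ℤ) = k := by push_cast; omega
      rw [if_neg h1, if_neg h1, if_pos h2, if_pos h3]; ring
    · have h3 : ¬ ((B.card + 1 : ℕ) : ℤ) = k := by push_cast; omega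
      rw [if_neg h1, if_neg h1, if_neg h2, if_neg h3]; ring

lemma pbin_zero_mul (p : Fin 0 → ℝ) (k : ℤ) : pbin 0 p k * pbin 0 p (k - 2) = 0 := by
  rcases lt_trichotomy k 0 with h | h | h
  · rw [pbin_eq_zero_of_neg 0 p k h, zero_mul]
  · rw [pbin_eq_zero_of_neg 0 p (k - 2) (by omega), mul_zero]
  · rw [pbin_eq_zero_of_gt 0 p k (by exact_mod_cast h), zero_mul]

lemma pbin_cross (n : ℕ) (p : Fin n → ℝ) (hp : ∀ i, 0 < p i ∧ p i < 1)
    (hLC : ∀ k : ℤ, pbin n p k * pbin n p (k - 2) ≤ pbin n p (k - 1) ^ 2) (k : ℤ) :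
    pbin n p k * pbin n p (k - 3) ≤ pbin n p (k - 1) * pbin n p (k - 2) := by
  have nn : ∀ j : ℤ, 0 ≤ pbin n p j := pbin_nonneg n p hp
  by_cases h1 : pbin n p (k - 1) = 0
  · have hr : ¬(0 ≤ k - 1 ∧ k - 1 ≤ (n : ℤ)) := fun h =>
      (pbin_pos n p hp (k - 1) h.1 h.2).ne' h1
    push_neg at hr
    rcases lt_or_ge (k - 1) 0 with h | h
    · rw [pbin_eq_zero_of_neg n p (k - 3) (by omega), mul_zero, h1, zero_mul]
    · rw [pbin_eq_zero_of_gt n p k (by omega), zero_mul, h1, zero_mul]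
  · by_cases h2 : pbin n p (k - 2) = 0
    · have hr : ¬(0 ≤ k - 2 ∧ k - 2 ≤ (n : ℤ)) := fun h =>
        (pbin_pos n p hp (k - 2) h.1 h.2).ne' h2
      push_neg at hr
      rcases lt_or_ge (k - 2) 0 with h | h
      · rw [pbin_eq_zero_of_neg n p (k - 3) (by omega), mul_zero, h2, mul_zero]
      · rw [pbin_eq_zero_of_gt n p k (by omega), zero_mul, h2, mul_zero]
    · have hb1 : 0 < pbin n p (k - 1) := lt_of_le_of_ne (nn _) (Ne.symm h1)
      have hb2 : 0 < pbin n p (k - 2) := lt_of_le_of_ne (nn _) (Ne.symm h2)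
      have hA := hLC k
      have hB := hLC (k - 1)
      have e1 : k - 1 - 2 = k - 3 := by ring
      have e2 : k - 1 - 1 = k - 2 := by ring
      rw [e1, e2] at hB
      have key : (pbin n p k * pbin n p (k - 3)) * (pbin n p (k - 1) * pbin n p (k - 2)) ≤
          (pbin n p (k - 1) * pbin n p (k - 2)) * (pbin n p (k - 1) * pbin n p (k - 2)) := by
        nlinarith [mul_le_mul hA hB (mul_nonneg (nn (k - 1)) (nn (k - 3))) (sq_nonneg (pbin n p (k - 1)))]
      exact le_of_mul_le_mul_right key (mul_pos hb1 hb2)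

lemma pbin_lc : ∀ (n : ℕ) (p : Fin n → ℝ), (∀ i, 0 < p i ∧ p i < 1) → ∀ k : ℤ,
    pbin n p k * pbin n p (k - 2) ≤ pbin n p (k - 1) ^ 2 := by
  intro n
  induction n with
  | zero =>
    intro p hp k
    rw [pbin_zero_mul]
    positivity
  | succ n ih =>
    intro p hp k
    set q := p (Fin.last n) with hq
    set p' := p ∘ Fin.castSucc with hp'def
    have hp' : ∀ i, 0 < p' i ∧ p' i < 1 := fun i => hp _
    have nn : ∀ j : ℤ, 0 ≤ pbin n p' j := pbin_nonneg n p' hp'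
    rw [pbin_succ, pbin_succ, pbin_succ]
    have e1 : k - 1 - 1 = k - 2 := by ring
    have e2 : k - 2 - 1 = k - 3 := by ring
    rw [e1, e2]
    set b0 := pbin n p' k
    set b1 := pbin n p' (k - 1)
    set b2 := pbin n p' (k - 2)
    set b3 := pbin n p' (k - 3)
    have hA : b0 * b2 ≤ b1 ^ 2 := ih p' hp' k
    have hB : b1 * b3 ≤ b2 ^ 2 := by
      have := ih p' hp' (k - 1)
      rwa [(by ring : k - 1 - 2 = k - 3), (by ring : k - 1 - 1 = k - 2)] at this
    have hC : b0 * b3 ≤ b1 * b2 := pbin_cross n p' hp' (ih p' hp') k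
    have hq0 := (hp (Fin.last n)).1
    have hq1 := (hp (Fin.last n)).2
    have key : ((1 - q) * b1 + q * b2) ^ 2 - ((1 - q) * b0 + q * b1) * ((1 - q) * b2 + q * b3)
        = (1 - q) ^ 2 * (b1 ^ 2 - b0 * b2) + q ^ 2 * (b2 ^ 2 - b1 * b3)
          + q * (1 - q) * (b1 * b2 - b0 * b3) := by ring
    nlinarith [mul_nonneg (sq_nonneg (1 - q)) (sub_nonneg.mpr hA),
      mul_nonneg (sq_nonneg q) (sub_nonneg.mpr hB),
      mul_nonneg (mul_nonneg hq0.le (by linarith : (0:ℝ) ≤ 1 - q)) (sub_nonneg.mpr hC)]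

lemma pbin_slc : ∀ (n : ℕ) (p : Fin n → ℝ), (∀ i, 0 < p i ∧ p i < 1) → ∀ k : ℤ,
    2 ≤ k → k ≤ (n : ℤ) → pbin n p k * pbin n p (k - 2) < pbin n p (k - 1) ^ 2 := by
  intro n
  induction n with
  | zero => intro p hp k hk1 hk2; omega
  | succ n ih =>
    intro p hp k hk1 hk2
    set q := p (Fin.last n) with hq
    set p' := p ∘ Fin.castSucc with hp'def
    have hp' : ∀ i, 0 < p' i ∧ p' i < 1 := fun i => hp _
    have nn : ∀ j : ℤ, 0 ≤ pbin n p' j := pbin_nonneg n p' hp'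
    rw [pbin_succ, pbin_succ, pbin_succ]
    rw [(by ring : k - 1 - 1 = k - 2), (by ring : k - 2 - 1 = k - 3)]
    set b0 := pbin n p' k with hb0
    set b1 := pbin n p' (k - 1) with hb1
    set b2 := pbin n p' (k - 2) with hb2
    set b3 := pbin n p' (k - 3) with hb3
    have hB : b1 * b3 ≤ b2 ^ 2 := by
      have := pbin_lc n p' hp' (k - 1)
      rwa [(by ring : k - 1 - 2 = k - 3), (by ring : k - 1 - 1 = k - 2)] at this
    have hC : b0 * b3 ≤ b1 * b2 := pbin_cross n p' hp' (pbin_lc n p' hp') k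
    have hA : b0 * b2 < b1 ^ 2 := by
      rcases lt_or_eq_of_le hk2 with h | h
    -- k ≤ n
      · exact ih p' hp' k hk1 (by omega)
      · have hb0z : b0 = 0 := by
          rw [hb0]; exact pbin_eq_zero_of_gt n p' k (by omega)
        have hb1p : 0 < b1 := by
          rw [hb1]; exact pbin_pos n p' hp' (k - 1) (by omega) (by omega)
        rw [hb0z, zero_mul]
        positivity
    have hq0 := (hp (Fin.last n)).1
    have hq1 := (hp (Fin.last n)).2
    nlinarith [mul_pos (pow_pos (by linarith : (0:ℝ) < 1 - q) 2) (sub_pos.mpr hA),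
      mul_nonneg (sq_nonneg q) (sub_nonneg.mpr hB),
      mul_nonneg (mul_nonneg hq0.le (by linarith : (0:ℝ) ≤ 1 - q)) (sub_nonneg.mpr hC)]

/-- Strict discrete log-concavity of the Poisson–binomial distribution:
`Δ²_k (log₂ b(k,p)) < 0` for `2 ≤ k ≤ n` and `p` in the open cube. -/
theorem pbin_strict_discrete_log_concave (n : ℕ) (hn : 2 ≤ n) (p : Fin n → ℝ)
    (hp : ∀ i, 0 < p i ∧ p i < 1) (k : ℕ) (hk1 : 2 ≤ k) (hk2 : k ≤ n) :
    Real.logb 2 (pbin n p k) - 2 * Real.logb 2 (pbin n p ((k : ℤ) - 1)) +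
      Real.logb 2 (pbin n p ((k : ℤ) - 2)) < 0 := by
  have hx : 0 < pbin n p k := pbin_pos n p hp k (by omega) (by exact_mod_cast hk2)
  have hy : 0 < pbin n p ((k : ℤ) - 1) := pbin_pos n p hp _ (by omega) (by omega)
  have hz : 0 < pbin n p ((k : ℤ) - 2) := pbin_pos n p hp _ (by omega) (by omega)
  have hs : pbin n p k * pbin n p ((k : ℤ) - 2) < pbin n p ((k : ℤ) - 1) ^ 2 :=
    pbin_slc n p hp k (by omega) (by omega)
  have hlog : Real.logb 2 (pbin n p k * pbin n p ((k : ℤ) - 2)) <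
      Real.logb 2 (pbin n p ((k : ℤ) - 1) ^ 2) :=
    Real.logb_lt_logb (by norm_num) (mul_pos hx hz) hs
  rw [Real.logb_mul hx.ne' hz.ne', Real.logb_pow] at hlog
  push_cast at hlog
  linarith
end
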